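/- For all integers 1 ≤ k ≤ n and every integer L ≥ 1, if B_{k,n} has the Beta(k, n−k+1) distribution, then E[−log B_{k,n}] ≥ Σ_{l=1}^{L} (1/l) · ∏_{j=1}^{l} (n+j−k)/(n+j). -/

import Mathlib

open MeasureTheory Real Set

/-- Density of the Beta(k, n−k+1) distribution. -/
noncomputable def betaOrderDensity (k n : ℕ) (x : ℝ) : ℝ :=
  ((Nat.factorial n : ℝ) / ((Nat.factorial (k - 1) : ℝ) * (Nat.factorial (n - k) : ℝ)))
    * x ^ (k - 1) * (1 - x) ^ (n - k)

/-- Integration-by-parts identity for Beta-type integrals. -/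
lemma beta_parts_id (a b : ℕ) :
    ((a:ℝ)+1) * ∫ x in (0:ℝ)..1, x^a * (1-x)^(b+1)
      = ((b:ℝ)+1) * ∫ x in (0:ℝ)..1, x^(a+1) * (1-x)^b := by
  have hd : ∀ x ∈ Set.uIcc (0:ℝ) 1, HasDerivAt (fun x : ℝ => x^(a+1) * (1-x)^(b+1))
      (((a:ℝ)+1) * x^a * (1-x)^(b+1) - ((b:ℝ)+1) * x^(a+1) * (1-x)^b) x := by
    intro x _
    have h1 : HasDerivAt (fun x : ℝ => x^(a+1)) (((a:ℝ)+1) * x^a) x := by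
      simpa using hasDerivAt_pow (a+1) x
    have h2 : HasDerivAt (fun x : ℝ => (1-x)^(b+1)) (-(((b:ℝ)+1) * (1-x)^b)) x := by
      have hs : HasDerivAt (fun x : ℝ => 1 - x) (-1) x := by
        simpa using (hasDerivAt_id x).const_sub 1
      have := hs.fun_pow (b+1)
      simpa [mul_comm, mul_assoc, mul_left_comm] using this
    have := h1.fun_mul h2
    refine this.congr_deriv ?_
    ring
  have hcont : Continuous (fun x : ℝ =>
      ((a:ℝ)+1) * x^a * (1-x)^(b+1) - ((b:ℝ)+1) * x^(a+1) * (1-x)^b) := by continuity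
  have h0 := intervalIntegral.integral_eq_sub_of_hasDerivAt hd (hcont.intervalIntegrable 0 1)
  have hval : (fun x : ℝ => x^(a+1) * (1-x)^(b+1)) 1 - (fun x : ℝ => x^(a+1) * (1-x)^(b+1)) 0
      = 0 := by simp
  rw [hval] at h0
  have i1 : IntervalIntegrable (fun x : ℝ => ((a:ℝ)+1) * (x^a * (1-x)^(b+1)))
      volume 0 1 := (by continuity : Continuous _).intervalIntegrable _ _
  have i2 : IntervalIntegrable (fun x : ℝ => ((b:ℝ)+1) * (x^(a+1) * (1-x)^b))
      volume 0 1 := (by continuity : Continuous _).intervalIntegrable _ _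
  have h0' : (∫ x in (0:ℝ)..1, (((a:ℝ)+1) * (x^a * (1-x)^(b+1))
      - ((b:ℝ)+1) * (x^(a+1) * (1-x)^b))) = 0 := by
    rw [← h0]; congr 1; ext x; ring
  rw [intervalIntegral.integral_sub i1 i2, sub_eq_zero,
    intervalIntegral.integral_const_mul, intervalIntegral.integral_const_mul] at h0'
  exact h0'

/-- The Euler Beta integral at natural parameters. -/
lemma beta_J_eq (b a : ℕ) : (∫ x in (0:ℝ)..1, x^a * (1-x)^b)
    = (Nat.factorial a * Nat.factorial b : ℝ) / (Nat.factorial (a+b+1)) := by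
  induction b generalizing a with
  | zero =>
    simp only [pow_zero, mul_one, Nat.factorial_zero, Nat.cast_one]
    rw [integral_pow]
    have : a + 0 + 1 = a + 1 := by ring
    rw [this, Nat.factorial_succ]
    push_cast
    have ha : (a:ℝ) + 1 ≠ 0 := by positivity
    have hfa : (Nat.factorial a : ℝ) ≠ 0 := by positivity
    field_simp
    simp
  | succ b ih =>
    have hp := beta_parts_id a b
    rw [ih (a+1)] at hp
    have ha : (a:ℝ) + 1 ≠ 0 := by positivity
    have key : (∫ x in (0:ℝ)..1, x^a * (1-x)^(b+1))
        = ((b:ℝ)+1) * ((Nat.factorial (a+1) * Nat.factorial b : ℝ)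
            / (Nat.factorial (a+1+b+1))) / ((a:ℝ)+1) := by
      field_simp at hp ⊢
      linarith [hp]
    rw [key]
    have h1 : a+1+b+1 = a+(b+1)+1 := by ring
    rw [h1, Nat.factorial_succ a, Nat.factorial_succ b]
    have hf : (Nat.factorial (a+(b+1)+1) : ℝ) ≠ 0 := by positivity
    push_cast
    field_simp

lemma beta_prod_eq (n k : ℕ) (hkn : k ≤ n) (l : ℕ) :
    (∏ j ∈ Finset.Icc 1 l, ((n : ℝ) + j - k) / ((n : ℝ) + j))
      = (Nat.factorial (n-k+l) * Nat.factorial n : ℝ)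
        / (Nat.factorial (n-k) * Nat.factorial (n+l)) := by
  induction l with
  | zero =>
    have f1 : (Nat.factorial (n-k) : ℝ) * Nat.factorial n ≠ 0 := by positivity
    simp [div_self f1]
  | succ l ih =>
    rw [Finset.prod_Icc_succ_top (Nat.le_add_left 1 l), ih]
    have e1 : (n:ℝ) + (l+1 : ℕ) - k = ((n-k+l : ℕ) : ℝ) + 1 := by
      push_cast [Nat.cast_sub hkn]; ring
    have e2 : ((n:ℝ) + ((l+1 : ℕ) : ℝ)) = ((n+l : ℕ) : ℝ) + 1 := by push_cast; ring
    have h1 : n - k + (l+1) = (n-k+l) + 1 := by omega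
    have h2 : n + (l+1) = (n+l) + 1 := by omega
    rw [h1, h2, e1, e2, Nat.factorial_succ, Nat.factorial_succ]
    have f1 : (Nat.factorial (n-k) : ℝ) ≠ 0 := by positivity
    have f2 : (Nat.factorial (n+l) : ℝ) ≠ 0 := by positivity
    have f3 : ((n+l : ℕ) : ℝ) + 1 ≠ 0 := by positivity
    push_cast
    field_simp

lemma beta_moment (k n : ℕ) (hk : 1 ≤ k) (hkn : k ≤ n) (l : ℕ) :
    (∫ x in Ioo (0:ℝ) 1, (1-x)^l * betaOrderDensity k n x)
      = ∏ j ∈ Finset.Icc 1 l, ((n : ℝ) + j - k) / ((n : ℝ) + j) := by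
  rw [beta_prod_eq n k hkn l]
  have h1 : (∫ x in Ioo (0:ℝ) 1, (1-x)^l * betaOrderDensity k n x)
      = ∫ x in (0:ℝ)..1, (1-x)^l * betaOrderDensity k n x := by
    rw [intervalIntegral.integral_of_le zero_le_one, integral_Ioc_eq_integral_Ioo]
  rw [h1]
  have h2 : ∀ x : ℝ, (1-x)^l * betaOrderDensity k n x
      = ((Nat.factorial n : ℝ)/((Nat.factorial (k-1) : ℝ) * Nat.factorial (n-k)))
        * (x^(k-1) * (1-x)^((n-k)+l)) := by
    intro x; rw [betaOrderDensity, pow_add]; ring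
  simp_rw [h2]
  rw [intervalIntegral.integral_const_mul, beta_J_eq]
  have h3 : (k-1) + ((n-k)+l) + 1 = n + l := by omega
  rw [h3]
  have f1 : (Nat.factorial (k-1) : ℝ) ≠ 0 := by positivity
  have f2 : (Nat.factorial (n-k) : ℝ) ≠ 0 := by positivity
  have f3 : (Nat.factorial (n+l) : ℝ) ≠ 0 := by positivity
  field_simp

/-- `-log` is integrable on `(0,1)`. -/
lemma neg_log_integrableOn : IntegrableOn (fun x : ℝ => -Real.log x) (Ioo (0:ℝ) 1) volume := by
  have hrpow : IntegrableOn (fun x : ℝ => x ^ (-(1/2) : ℝ)) (Ioo (0:ℝ) 1) volume := by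
    have := (intervalIntegral.intervalIntegrable_rpow' (a := 0) (b := 1)
      (r := -(1/2)) (by norm_num)).1
    exact (this.mono_set Ioo_subset_Ioc_self)
  refine Integrable.mono' (hrpow.const_mul 2) ?_ ?_
  · exact (Real.measurable_log.neg).aestronglyMeasurable
  · rw [ae_restrict_iff' measurableSet_Ioo]
    filter_upwards with x hx
    obtain ⟨hx0, hx1⟩ := hx
    have hlog : 0 ≤ -Real.log x := by
      have := Real.log_nonpos hx0.le hx1.le
      linarith
    rw [Real.norm_eq_abs, abs_of_nonneg hlog]
    have hr : Real.log (x ^ (-(1/2) : ℝ)) ≤ x ^ (-(1/2) : ℝ) := by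
      have := Real.log_le_sub_one_of_pos (Real.rpow_pos_of_pos hx0 (-(1/2) : ℝ))
      linarith
    rw [Real.log_rpow hx0] at hr
    linarith

/-- For B_{k,n} ∼ Beta(k, n−k+1) and every L ≥ 1,
E[−log B_{k,n}] ≥ Σ_{l=1}^{L} (1/l) ∏_{j=1}^{l} (n+j−k)/(n+j). -/
theorem beta_neg_log_lower_bound (k n L : ℕ) (hk : 1 ≤ k) (hkn : k ≤ n) (hL : 1 ≤ L) :
    (∑ l ∈ Finset.Icc 1 L, (1 / (l : ℝ)) *
        ∏ j ∈ Finset.Icc 1 l, ((n : ℝ) + j - k) / ((n : ℝ) + j))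
      ≤ ∫ x in Ioo (0 : ℝ) 1, (-Real.log x) * betaOrderDensity k n x := by
  set d := betaOrderDensity k n with hdd
  set C : ℝ := (Nat.factorial n : ℝ) / ((Nat.factorial (k-1) : ℝ) * Nat.factorial (n-k))
    with hCdef
  have hd_cont : Continuous d := by
    rw [hdd]; unfold betaOrderDensity; continuity
  have hC0 : 0 ≤ C := by rw [hCdef]; positivity
  have hd_bound : ∀ x ∈ Ioo (0:ℝ) 1, 0 ≤ d x ∧ d x ≤ C := by
    rintro x ⟨hx0, hx1⟩
    have hx1' : 0 ≤ 1 - x := by linarith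
    constructor
    · rw [hdd]; unfold betaOrderDensity; positivity
    · rw [hdd]; unfold betaOrderDensity
      have h1 : x ^ (k-1) ≤ 1 := pow_le_one₀ hx0.le hx1.le
      have h2 : (1-x) ^ (n-k) ≤ 1 := pow_le_one₀ hx1' (by linarith)
      calc C * x^(k-1) * (1-x)^(n-k) ≤ C * 1 * 1 := by
            apply mul_le_mul (mul_le_mul le_rfl h1 (by positivity) hC0) h2 (by positivity)
            positivity
        _ = C := by ring
  have h_int_main : IntegrableOn (fun x => (-Real.log x) * d x) (Ioo (0:ℝ) 1) volume := by
    refine Integrable.mono' (neg_log_integrableOn.const_mul C) ?_ ?_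
    · exact ((Real.measurable_log.neg).mul hd_cont.measurable).aestronglyMeasurable
    · rw [ae_restrict_iff' measurableSet_Ioo]
      filter_upwards with x hx
      obtain ⟨h0, h1⟩ := hd_bound x hx
      have hlog : 0 ≤ -Real.log x := by
        have := Real.log_nonpos hx.1.le hx.2.le; linarith
      rw [Real.norm_eq_abs, abs_of_nonneg (mul_nonneg hlog h0)]
      calc (-Real.log x) * d x ≤ (-Real.log x) * C :=
            mul_le_mul_of_nonneg_left h1 hlog
        _ = C * (-Real.log x) := mul_comm _ _
  have h_each_int : ∀ l ∈ Finset.Icc 1 L,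
      IntegrableOn (fun x : ℝ => (1/(l:ℝ)) * ((1-x)^l * d x)) (Ioo (0:ℝ) 1) volume := by
    intro l _
    have hc : Continuous (fun x : ℝ => (1/(l:ℝ)) * ((1-x)^l * d x)) := by continuity
    exact (hc.integrableOn_Icc).mono_set Ioo_subset_Icc_self
  have hsum_eq : (∑ l ∈ Finset.Icc 1 L, (1 / (l : ℝ)) *
        ∏ j ∈ Finset.Icc 1 l, ((n : ℝ) + j - k) / ((n : ℝ) + j))
      = ∫ x in Ioo (0:ℝ) 1, ∑ l ∈ Finset.Icc 1 L, (1/(l:ℝ)) * ((1-x)^l * d x) := by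
    rw [integral_finset_sum _ h_each_int]
    apply Finset.sum_congr rfl
    intro l _
    rw [MeasureTheory.integral_const_mul, beta_moment k n hk hkn l]
  rw [hsum_eq]
  apply setIntegral_mono_on (integrable_finset_sum _ h_each_int) h_int_main measurableSet_Ioo
  intro x hx
  obtain ⟨hx0, hx1⟩ := hx
  have hdx := (hd_bound x ⟨hx0, hx1⟩).1
  have key : (∑ l ∈ Finset.Icc 1 L, (1/(l:ℝ)) * (1-x)^l) ≤ -Real.log x := by
    have habs : |1 - x| < 1 := by rw [abs_lt]; constructor <;> linarith
    have hs := Real.hasSum_pow_div_log_of_abs_lt_one habs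
    have h11 : (1 : ℝ) - (1-x) = x := by ring
    rw [h11] at hs
    have hy : (0:ℝ) ≤ 1 - x := by linarith
    have hle := sum_le_hasSum (Finset.range L)
      (fun i _ => div_nonneg (pow_nonneg hy _) (by positivity)
        : ∀ i ∉ Finset.range L, 0 ≤ (1-x)^(i+1)/((i:ℝ)+1)) hs
    refine le_trans (le_of_eq ?_) hle
    rw [← Finset.Ico_add_one_right_eq_Icc, Finset.sum_Ico_eq_sum_range]
    apply Finset.sum_congr rfl
    intro i _
    push_cast
    rw [add_comm 1 (i:ℝ), add_comm 1 i]
    ring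
  calc (∑ l ∈ Finset.Icc 1 L, (1/(l:ℝ)) * ((1-x)^l * d x))
      = (∑ l ∈ Finset.Icc 1 L, (1/(l:ℝ)) * (1-x)^l) * d x := by
        rw [Finset.sum_mul]; apply Finset.sum_congr rfl; intro l _; ring
    _ ≤ (-Real.log x) * d x := mul_le_mul_of_nonneg_right key hdx
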